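/- Let Γ be a finite cyclic group acting linearly on ℝⁿ, let x₀ ∈ ℝⁿ, and let A : ℝⁿ → ℝⁿ be a linear map that commutes with every element of the isotropy subgroup Σ_{x₀} = {γ ∈ Γ : γ·x₀ = x₀}. Then there exists a Γ-equivariant polynomial vector field f : ℝⁿ → ℝⁿ such that f(x₀) = 0 and (df)_{x₀} = A. -/

import Mathlib

open MvPolynomial

variable {n : ℕ}

def PolyFun (g : (Fin n → ℝ) → ℝ) : Prop :=
  ∃ p : MvPolynomial (Fin n) ℝ, ∀ v, g v = MvPolynomial.eval v p

lemma polyFun_const (a : ℝ) : PolyFun (fun _ : Fin n → ℝ => a) := ⟨C a, by simp⟩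

lemma PolyFun.add {g h : (Fin n → ℝ) → ℝ} (hg : PolyFun g) (hh : PolyFun h) :
    PolyFun (fun v => g v + h v) := by
  obtain ⟨p, hp⟩ := hg; obtain ⟨q, hq⟩ := hh
  exact ⟨p + q, fun v => by simp [hp, hq]⟩

lemma PolyFun.sub {g h : (Fin n → ℝ) → ℝ} (hg : PolyFun g) (hh : PolyFun h) :
    PolyFun (fun v => g v - h v) := by
  obtain ⟨p, hp⟩ := hg; obtain ⟨q, hq⟩ := hh
  exact ⟨p - q, fun v => by simp [hp, hq]⟩

lemma PolyFun.mul {g h : (Fin n → ℝ) → ℝ} (hg : PolyFun g) (hh : PolyFun h) :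
    PolyFun (fun v => g v * h v) := by
  obtain ⟨p, hp⟩ := hg; obtain ⟨q, hq⟩ := hh
  exact ⟨p * q, fun v => by simp [hp, hq]⟩

lemma PolyFun.pow {g : (Fin n → ℝ) → ℝ} (hg : PolyFun g) (k : ℕ) :
    PolyFun (fun v => g v ^ k) := by
  obtain ⟨p, hp⟩ := hg
  exact ⟨p ^ k, fun v => by simp [hp]⟩

lemma polyFun_sum {ι : Type*} (s : Finset ι) (g : ι → (Fin n → ℝ) → ℝ)
    (h : ∀ i, PolyFun (g i)) : PolyFun (fun v => ∑ i ∈ s, g i v) := by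
  choose p hp using h
  exact ⟨∑ i ∈ s, p i, fun v => by simp [hp]⟩

lemma polyFun_prod {ι : Type*} (s : Finset ι) (g : ι → (Fin n → ℝ) → ℝ)
    (h : ∀ i, PolyFun (g i)) : PolyFun (fun v => ∏ i ∈ s, g i v) := by
  choose p hp using h
  exact ⟨∏ i ∈ s, p i, fun v => by simp [hp]⟩

lemma linear_apply_eq_sum (M : (Fin n → ℝ) →ₗ[ℝ] (Fin n → ℝ)) (w : Fin n → ℝ) (i : Fin n) :
    M w i = ∑ j, w j * M (Pi.single j 1) i := by
  conv_lhs => rw [← Finset.univ_sum_single w]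
  rw [map_sum, Finset.sum_apply]
  refine Finset.sum_congr rfl fun j _ => ?_
  have : Pi.single j (w j) = w j • (Pi.single j (1 : ℝ) : Fin n → ℝ) := by
    rw [← Pi.single_smul, smul_eq_mul, mul_one]
  rw [this, map_smul]
  simp

lemma polyFun_linear (M : (Fin n → ℝ) →ₗ[ℝ] (Fin n → ℝ)) (i : Fin n) :
    PolyFun (fun v => M v i) := by
  refine ⟨∑ j, C (M (Pi.single j 1) i) * X j, fun v => ?_⟩
  dsimp only
  rw [linear_apply_eq_sum]
  simp [mul_comm]

lemma hz_hasFDerivAt (z p : Fin n → ℝ) :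
    HasFDerivAt (fun x : Fin n → ℝ => ∑ i, (x i - z i) ^ 2)
      (∑ i, ((2 : ℝ) * (p i - z i)) •
        (ContinuousLinearMap.proj i : (Fin n → ℝ) →L[ℝ] ℝ)) p := by
  refine HasFDerivAt.fun_sum fun i _ => ?_
  have h1 : HasFDerivAt (fun x : Fin n → ℝ => x i - z i)
      (ContinuousLinearMap.proj i : (Fin n → ℝ) →L[ℝ] ℝ) p :=
    (hasFDerivAt_apply i p).sub_const _
  have h2 := h1.mul h1
  have heq : (fun x : Fin n → ℝ => (x i - z i) ^ 2) =
      fun x : Fin n → ℝ => (x i - z i) * (x i - z i) := by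
    funext x; ring
  rw [heq, two_mul, add_smul]
  exact h2

lemma hz_hasFDerivAt_self (z : Fin n → ℝ) :
    HasFDerivAt (fun x : Fin n → ℝ => ∑ i, (x i - z i) ^ 2) (0 : (Fin n → ℝ) →L[ℝ] ℝ) z := by
  have h0 : (∑ i, ((2 : ℝ) * (z i - z i)) •
      (ContinuousLinearMap.proj i : (Fin n → ℝ) →L[ℝ] ℝ)) = 0 := by
    simp
  rw [← h0]
  exact hz_hasFDerivAt z z



/-- For a finite cyclic group `Γ` acting linearly on `ℝⁿ`, a point `x₀` and any linear
map `A` commuting with the isotropy subgroup of `x₀`, there is a `Γ`-equivariant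
polynomial vector field `f` with `f x₀ = 0` and `(df)_{x₀} = A`. -/
theorem exists_equivariant_polynomial_field_with_prescribed_linearization
    (n : ℕ) (Γ : Type*) [Group Γ] [Fintype Γ] [IsCyclic Γ]
    (ρ : Representation ℝ Γ (Fin n → ℝ)) (x₀ : Fin n → ℝ)
    (A : (Fin n → ℝ) →ₗ[ℝ] (Fin n → ℝ))
    (hA : ∀ γ : Γ, ρ γ x₀ = x₀ → ∀ v : Fin n → ℝ, A (ρ γ v) = ρ γ (A v)) :
    ∃ f : (Fin n → ℝ) → (Fin n → ℝ),
      (∃ p : Fin n → MvPolynomial (Fin n) ℝ,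
        ∀ (v : Fin n → ℝ) (i : Fin n), f v i = MvPolynomial.eval v (p i)) ∧
      (∀ (γ : Γ) (v : Fin n → ℝ), f (ρ γ v) = ρ γ (f v)) ∧
      f x₀ = 0 ∧
      HasFDerivAt f (LinearMap.toContinuousLinearMap A) x₀ := by
  classical
  have hρinv : ∀ (γ : Γ) (v : Fin n → ℝ), ρ γ (ρ γ⁻¹ v) = v := by
    intro γ v
    rw [← Module.End.mul_apply, ← map_mul, mul_inv_cancel, map_one, Module.End.one_apply]
  have hρinv' : ∀ (γ : Γ) (v : Fin n → ℝ), ρ γ⁻¹ (ρ γ v) = v := by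
    intro γ v
    rw [← Module.End.mul_apply, ← map_mul, inv_mul_cancel, map_one, Module.End.one_apply]
  set S : Finset (Fin n → ℝ) := (Finset.univ.image fun γ : Γ => ρ γ x₀).erase x₀ with hSdef
  set q : (Fin n → ℝ) → ℝ := fun x => ∏ z ∈ S, ∑ i, (x i - z i) ^ 2 with hqdef
  -- q is positive at x₀
  have hqpos : 0 < q x₀ := by
    apply Finset.prod_pos
    intro z hz
    have hzne : z ≠ x₀ := Finset.ne_of_mem_erase hz
    obtain ⟨i, hi⟩ := Function.ne_iff.mp hzne
    have hne : x₀ i - z i ≠ 0 := sub_ne_zero.mpr (Ne.symm hi)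
    refine Finset.sum_pos' (fun j _ => sq_nonneg _) ⟨i, Finset.mem_univ i, ?_⟩
    exact lt_of_le_of_ne (sq_nonneg _) (Ne.symm (pow_ne_zero 2 hne))
  -- q vanishes on S
  have hqS : ∀ y ∈ S, q y = 0 := by
    intro y hy
    exact Finset.prod_eq_zero hy (by simp)
  -- q has zero derivative on S
  have hqS' : ∀ y ∈ S, HasFDerivAt q (0 : (Fin n → ℝ) →L[ℝ] ℝ) y := by
    intro y hy
    have hder : ∀ z ∈ S, HasFDerivAt (fun x : Fin n → ℝ => ∑ i, (x i - z i) ^ 2)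
        (if z = y then (0 : (Fin n → ℝ) →L[ℝ] ℝ)
          else ∑ i, ((2 : ℝ) * (y i - z i)) •
            (ContinuousLinearMap.proj i : (Fin n → ℝ) →L[ℝ] ℝ)) y := by
      intro z _
      by_cases hzy : z = y
      · subst hzy
        rw [if_pos rfl]; exact hz_hasFDerivAt_self z
      · simpa only [if_neg hzy] using hz_hasFDerivAt z y
    have hprod := HasFDerivAt.finset_prod hder
    refine hprod.congr_fderiv ?_
    refine Finset.sum_eq_zero fun z hz => ?_
    by_cases hzy : z = y
    · simp [hzy]
    · rw [Finset.prod_eq_zero (Finset.mem_erase.mpr ⟨fun h => hzy h.symm, hy⟩) (by simp)]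
      simp
  -- some derivative of q at x₀
  obtain ⟨Dq, hDq⟩ : ∃ D, HasFDerivAt q D x₀ :=
    ⟨_, HasFDerivAt.finset_prod (fun z _ => hz_hasFDerivAt z x₀)⟩
  set m := (Finset.univ.filter fun γ : Γ => ρ γ x₀ = x₀).card with hmdef
  have hm : 0 < m := Finset.card_pos.mpr ⟨1, by simp⟩
  set c : ℝ := (m : ℝ) * q x₀ with hcdef
  have hc : c ≠ 0 := ne_of_gt (mul_pos (Nat.cast_pos.mpr hm) hqpos)
  have hfixinv : ∀ γ : Γ, ρ γ x₀ = x₀ → ρ γ⁻¹ x₀ = x₀ := by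
    intro γ hγ
    have := congrArg (ρ γ⁻¹) hγ
    rw [hρinv'] at this
    exact this.symm
  have hyS : ∀ γ : Γ, ¬ ρ γ x₀ = x₀ → ρ γ⁻¹ x₀ ∈ S := by
    intro γ hγ
    refine Finset.mem_erase.mpr ⟨?_, Finset.mem_image.mpr ⟨γ⁻¹, Finset.mem_univ _, rfl⟩⟩
    intro heq
    have := congrArg (ρ γ) heq
    rw [hρinv] at this
    exact hγ this.symm
  refine ⟨fun x => c⁻¹ • ∑ γ : Γ, ρ γ (q (ρ γ⁻¹ x) • A (ρ γ⁻¹ x - x₀)), ?_, ?_, ?_, ?_⟩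
  · -- polynomial
    have hpoly : ∀ i, PolyFun
        (fun v => (c⁻¹ • ∑ γ : Γ, ρ γ (q (ρ γ⁻¹ v) • A (ρ γ⁻¹ v - x₀))) i) := by
      intro i
      have hq' : ∀ γ : Γ, PolyFun (fun v => q (ρ γ⁻¹ v)) := by
        intro γ
        have := polyFun_prod S
          (fun z v => ∑ j, ((ρ γ⁻¹) v j - z j) ^ 2)
          (fun z => polyFun_sum Finset.univ _
            (fun j => ((polyFun_linear (ρ γ⁻¹) j).sub (polyFun_const (z j))).pow 2))
        obtain ⟨p, hp⟩ := this
        exact ⟨p, fun v => hp v⟩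
      have hAc : ∀ (γ : Γ) (j : Fin n), PolyFun (fun v => A (ρ γ⁻¹ v - x₀) j) := by
        intro γ j
        obtain ⟨p, hp⟩ := (polyFun_linear (A ∘ₗ (ρ γ⁻¹)) j).sub (polyFun_const (A x₀ j))
        refine ⟨p, fun v => ?_⟩
        rw [← hp v]
        simp [map_sub]
      have hterm : ∀ γ : Γ, PolyFun (fun v => (ρ γ (q (ρ γ⁻¹ v) • A (ρ γ⁻¹ v - x₀))) i) := by
        intro γ
        obtain ⟨p, hp⟩ := polyFun_sum (Finset.univ : Finset (Fin n))
          (fun j v => q (ρ γ⁻¹ v) * A (ρ γ⁻¹ v - x₀) j * (ρ γ) (Pi.single j 1) i)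
          (fun j => ((hq' γ).mul (hAc γ j)).mul (polyFun_const _))
        refine ⟨p, fun v => ?_⟩
        dsimp only
        rw [← hp v]
        dsimp only
        rw [linear_apply_eq_sum (ρ γ)]
        refine Finset.sum_congr rfl fun j _ => ?_
        simp [mul_assoc]
      obtain ⟨p, hp⟩ := (polyFun_const c⁻¹).mul
        (polyFun_sum (Finset.univ : Finset Γ) _ hterm)
      refine ⟨p, fun v => ?_⟩
      rw [← hp v]
      simp [Finset.sum_apply]
    exact ⟨fun i => (hpoly i).choose, fun v i => (hpoly i).choose_spec v⟩
  · -- equivariance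
    intro δ x
    have reidx : ∑ γ : Γ, ρ δ (ρ γ (q (ρ γ⁻¹ x) • A (ρ γ⁻¹ x - x₀)))
        = ∑ γ : Γ, ρ γ (q (ρ γ⁻¹ (ρ δ x)) • A (ρ γ⁻¹ (ρ δ x) - x₀)) := by
      refine Fintype.sum_equiv (Equiv.mulLeft δ) _ _ fun γ => ?_
      have h1 : ρ ((δ * γ)⁻¹) (ρ δ x) = ρ γ⁻¹ x := by
        rw [mul_inv_rev, map_mul, Module.End.mul_apply, hρinv']
      have h2 : ∀ w, ρ (δ * γ) w = ρ δ (ρ γ w) := by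
        intro w; rw [map_mul, Module.End.mul_apply]
      simp only [Equiv.coe_mulLeft, h1, h2]
    dsimp only
    rw [map_smul, map_sum]
    exact congrArg (fun t => c⁻¹ • t) reidx.symm
  · -- vanishing at x₀
    have hz : ∀ γ : Γ, ρ γ (q (ρ γ⁻¹ x₀) • A (ρ γ⁻¹ x₀ - x₀)) = 0 := by
      intro γ
      by_cases hγ : ρ γ x₀ = x₀
      · rw [hfixinv γ hγ]
        simp
      · rw [hqS _ (hyS γ hγ)]
        simp
    dsimp only
    rw [Finset.sum_eq_zero (fun γ _ => hz γ), smul_zero]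
  · -- derivative
    set Acl : (Fin n → ℝ) →L[ℝ] (Fin n → ℝ) := LinearMap.toContinuousLinearMap A with hAcl
    have hterm : ∀ γ : Γ, HasFDerivAt
        (fun x => ρ γ (q (ρ γ⁻¹ x) • A (ρ γ⁻¹ x - x₀)))
        (if ρ γ x₀ = x₀ then q x₀ • Acl else 0) x₀ := by
      intro γ
      set Lg : (Fin n → ℝ) →L[ℝ] (Fin n → ℝ) := LinearMap.toContinuousLinearMap (ρ γ⁻¹)
        with hLg
      set Rg : (Fin n → ℝ) →L[ℝ] (Fin n → ℝ) := LinearMap.toContinuousLinearMap (ρ γ)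
        with hRg
      have hLgco : ∀ v, Lg v = ρ γ⁻¹ v := fun v => rfl
      have hw : HasFDerivAt (fun x => A (ρ γ⁻¹ x - x₀)) (Acl.comp Lg) x₀ := by
        have heq : (fun x => A (ρ γ⁻¹ x - x₀)) = fun x => (Acl.comp Lg) x - A x₀ := by
          funext x
          simp [map_sub, hAcl, hLg]
        rw [heq]
        exact (Acl.comp Lg).hasFDerivAt.sub_const _
      by_cases hγ : ρ γ x₀ = x₀
      · have hfix : ρ γ⁻¹ x₀ = x₀ := hfixinv γ hγ
        have hDq' : HasFDerivAt q Dq (Lg x₀) := by rw [hLgco, hfix]; exact hDq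
        have hu : HasFDerivAt (fun x => q (ρ γ⁻¹ x)) (Dq.comp Lg) x₀ := by
          have := hDq'.comp x₀ Lg.hasFDerivAt
          exact this
        have hsmul := hu.smul hw
        have final := Rg.hasFDerivAt.comp x₀ hsmul
        have hfun : (⇑Rg ∘ ((fun x => q (ρ γ⁻¹ x)) • fun x => A (ρ γ⁻¹ x - x₀)))
            = fun x => ρ γ (q (ρ γ⁻¹ x) • A (ρ γ⁻¹ x - x₀)) := by
          funext x
          simp [hRg]
        rw [hfun] at final
        rw [if_pos hγ]
        refine final.congr_fderiv ?_
        ext v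
        simp only [ContinuousLinearMap.coe_comp', Function.comp_apply,
          ContinuousLinearMap.add_apply, ContinuousLinearMap.coe_smul',
          Pi.smul_apply, ContinuousLinearMap.smulRight_apply, hfix, sub_self,
          map_zero, smul_zero, add_zero, map_smul]
        rw [show Acl (Lg v) = A (ρ γ⁻¹ v) from rfl,
          show (Rg : (Fin n → ℝ) → (Fin n → ℝ)) = ⇑(ρ γ) from rfl]
        rw [← hA γ hγ (ρ γ⁻¹ v), hρinv]
        rfl
      · have hy : ρ γ⁻¹ x₀ ∈ S := hyS γ hγ
        have hDq' : HasFDerivAt q (0 : (Fin n → ℝ) →L[ℝ] ℝ) (Lg x₀) := by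
          rw [hLgco]; exact hqS' _ hy
        have hu : HasFDerivAt (fun x => q (ρ γ⁻¹ x))
            ((0 : (Fin n → ℝ) →L[ℝ] ℝ).comp Lg) x₀ := by
          have := hDq'.comp x₀ Lg.hasFDerivAt
          exact this
        have hsmul := hu.smul hw
        have final := Rg.hasFDerivAt.comp x₀ hsmul
        have hfun : (⇑Rg ∘ ((fun x => q (ρ γ⁻¹ x)) • fun x => A (ρ γ⁻¹ x - x₀)))
            = fun x => ρ γ (q (ρ γ⁻¹ x) • A (ρ γ⁻¹ x - x₀)) := by
          funext x
          simp [hRg]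
        rw [hfun] at final
        rw [if_neg hγ]
        refine final.congr_fderiv ?_
        ext v
        simp [hqS _ hy]
    have hsum := HasFDerivAt.fun_sum (fun γ (_ : γ ∈ (Finset.univ : Finset Γ)) => hterm γ)
    have final := hsum.const_smul c⁻¹
    refine final.congr_fderiv ?_
    have hEsum : (∑ γ : Γ, if ρ γ x₀ = x₀ then q x₀ • Acl else 0)
        = m • (q x₀ • Acl) := by
      rw [← Finset.sum_filter, Finset.sum_const, hmdef]
    rw [hEsum, ← Nat.cast_smul_eq_nsmul ℝ, smul_smul, smul_smul, hcdef]
    rw [mul_assoc, inv_mul_cancel₀ hc]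
    exact one_smul _ _
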